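/- Matched-pair coloring lemma: let U = {u_1,...,u_n} and V = {v_1,...,v_n} be disjoint vertex sets, and consider the hypergraph with hyperedges U, U_K ∪ (V∖V_K) for all K ⊆ {1,...,n} with |K| odd and |K| ≤ ⌊n/2⌋, and V_K ∪ (U∖U_K) for all K with |K| even and 2 ≤ |K| ≤ ⌊n/2⌋. If a Red/Blue coloring χ of U ∪ V has the property that there do not exist two indices i ≠ j with u_i, v_i both Red and u_j, v_j both Blue, then some hyperedge of this hypergraph is monochromatic under χ. -/

import Mathlib

/-- A family of finsets is `n`-uniform if every hyperedge has `n` elements. -/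
def IsUniform (n : ℕ) (E : Finset (Finset ℕ)) : Prop := ∀ e ∈ E, e.card = n

/-- A hypergraph (family of hyperedges) is 2-colorable if there is a Red/Blue
coloring of the vertices such that no hyperedge is monochromatic. -/
def Colorable2 (E : Finset (Finset ℕ)) : Prop :=
  ∃ χ : ℕ → Bool, ∀ e ∈ E, (∃ v ∈ e, χ v = true) ∧ (∃ v ∈ e, χ v = false)

/-- `m n` is the least number of hyperedges in a non-2-colorable `n`-uniform hypergraph. -/
noncomputable def m (n : ℕ) : ℕ :=
  sInf {k | ∃ E : Finset (Finset ℕ), IsUniform n E ∧ ¬ Colorable2 E ∧ E.card = k}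

/-- A hyperedge is monochromatic under `χ` if all its vertices get the same color. -/
def Mono (χ : ℕ → Bool) (s : Finset ℕ) : Prop :=
  (∀ x ∈ s, χ x = true) ∨ (∀ x ∈ s, χ x = false)

/-- Matched-pair coloring lemma: if there are no two indices `i ≠ j` with `u i, v i`
both Red and `u j, v j` both Blue, then one of the hyperedges `U`,
`U_K ∪ (V ∖ V_K)` (`|K|` odd, `|K| ≤ ⌊n/2⌋`), `V_K ∪ (U ∖ U_K)` (`|K|` even,
`2 ≤ |K| ≤ ⌊n/2⌋`) is monochromatic. -/
lemma mono_of_const {χ : ℕ → Bool} {s : Finset ℕ} (c : Bool) (h : ∀ x ∈ s, χ x = c) :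
    Mono χ s := by cases c; exacts [Or.inr h, Or.inl h]

lemma bool_ne {x c : Bool} (h : x ≠ c) : x = !c := by cases x <;> cases c <;> simp_all

lemma exists_mid {n : ℕ} (L M : Finset (Fin n)) (h : L ⊆ M) (k : ℕ)
    (h1 : L.card ≤ k) (h2 : k ≤ M.card) : ∃ K, L ⊆ K ∧ K ⊆ M ∧ K.card = k := by
  obtain ⟨K, h3, h4, h5⟩ := Finset.exists_subsuperset_card_eq h h1 h2
  exact ⟨K, h3, h4, by omega⟩

lemma odd_branch {n : ℕ} {u v : Fin n → ℕ} {χ : ℕ → Bool}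
    (K : Finset (Fin n)) (h1 : Odd K.card) (h2 : K.card ≤ n / 2)
    (c : Bool) (hu : ∀ i ∈ K, χ (u i) = c) (hv : ∀ i ∈ Finset.univ \ K, χ (v i) = c) :
    ∃ K : Finset (Fin n), Odd K.card ∧ K.card ≤ n / 2 ∧
      Mono χ (K.image u ∪ (Finset.univ \ K).image v) := by
  refine ⟨K, h1, h2, mono_of_const c ?_⟩
  intro x hx
  rcases Finset.mem_union.1 hx with hx | hx <;> obtain ⟨i, hi, rfl⟩ := Finset.mem_image.1 hx
  · exact hu i hi
  · exact hv i hi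

lemma even_branch {n : ℕ} {u v : Fin n → ℕ} {χ : ℕ → Bool}
    (K : Finset (Fin n)) (h1 : Even K.card) (h2 : 2 ≤ K.card) (h3 : K.card ≤ n / 2)
    (c : Bool) (hv : ∀ i ∈ K, χ (v i) = c) (hu : ∀ i ∈ Finset.univ \ K, χ (u i) = c) :
    ∃ K : Finset (Fin n), Even K.card ∧ 2 ≤ K.card ∧ K.card ≤ n / 2 ∧
      Mono χ (K.image v ∪ (Finset.univ \ K).image u) := by
  refine ⟨K, h1, h2, h3, mono_of_const c ?_⟩
  intro x hx
  rcases Finset.mem_union.1 hx with hx | hx <;> obtain ⟨i, hi, rfl⟩ := Finset.mem_image.1 hx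
  · exact hv i hi
  · exact hu i hi

lemma main_aux {n : ℕ} (u v : Fin n → ℕ) (χ : ℕ → Bool) (c : Bool)
    (hc : ∀ i, χ (u i) = c ∨ χ (v i) = c) :
    Mono χ (Finset.univ.image u) ∨
    (∃ K : Finset (Fin n), Odd K.card ∧ K.card ≤ n / 2 ∧
      Mono χ (K.image u ∪ (Finset.univ \ K).image v)) ∨
    (∃ K : Finset (Fin n), Even K.card ∧ 2 ≤ K.card ∧ K.card ≤ n / 2 ∧
      Mono χ (K.image v ∪ (Finset.univ \ K).image u)) := by
  classical
  set A := Finset.univ.filter (fun i => χ (v i) ≠ c) with hA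
  set B := Finset.univ.filter (fun i => χ (u i) ≠ c) with hB
  have hAmem : ∀ i : Fin n, i ∈ A ↔ χ (v i) ≠ c := fun i => by simp [hA]
  have hBmem : ∀ i : Fin n, i ∈ B ↔ χ (u i) ≠ c := fun i => by simp [hB]
  have hdisj : Disjoint A B := by
    rw [Finset.disjoint_left]
    intro i hiA hiB
    rcases hc i with h | h
    · exact (hBmem i).1 hiB h
    · exact (hAmem i).1 hiA h
  have hAsubBc : A ⊆ Finset.univ \ B := by
    intro i hi
    simp only [Finset.mem_sdiff, Finset.mem_univ, true_and]
    exact fun hiB => Finset.disjoint_left.1 hdisj hi hiB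
  have hBsubAc : B ⊆ Finset.univ \ A := by
    intro i hi
    simp only [Finset.mem_sdiff, Finset.mem_univ, true_and]
    exact fun hiA => Finset.disjoint_left.1 hdisj hiA hi
  have hcardU : (Finset.univ : Finset (Fin n)).card = n := by simp
  have hab : A.card + B.card ≤ n := by
    have h1 := Finset.card_union_of_disjoint hdisj
    have h2 := Finset.card_le_univ (A ∪ B)
    rw [Fintype.card_fin] at h2
    omega
  have hcardBc : (Finset.univ \ B).card = n - B.card := by
    rw [Finset.card_sdiff_of_subset (Finset.subset_univ _), hcardU]
  have hcardAc : (Finset.univ \ A).card = n - A.card := by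
    rw [Finset.card_sdiff_of_subset (Finset.subset_univ _), hcardU]
  -- facts for membership
  have hnotB : ∀ i : Fin n, i ∉ B → χ (u i) = c := by
    intro i hi; by_contra h; exact hi ((hBmem i).2 h)
  have hnotA : ∀ i : Fin n, i ∉ A → χ (v i) = c := by
    intro i hi; by_contra h; exact hi ((hAmem i).2 h)
  have hinB : ∀ i : Fin n, i ∈ B → χ (u i) = !c := fun i hi => bool_ne ((hBmem i).1 hi)
  have hinA : ∀ i : Fin n, i ∈ A → χ (v i) = !c := fun i hi => bool_ne ((hAmem i).1 hi)
  by_cases hb0 : B = ∅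
  · left
    refine mono_of_const c fun x hx => ?_
    obtain ⟨i, _, rfl⟩ := Finset.mem_image.1 hx
    exact hnotB i (by simp [hb0])
  by_cases hbn : B = Finset.univ
  · left
    refine mono_of_const (!c) fun x hx => ?_
    obtain ⟨i, _, rfl⟩ := Finset.mem_image.1 hx
    exact hinB i (by simp [hbn])
  have hb1 : 1 ≤ B.card := Finset.card_pos.2 (Finset.nonempty_iff_ne_empty.2 hb0)
  have hbn1 : B.card ≤ n - 1 := by
    have : B.card < n := by
      have := Finset.card_lt_card ((Finset.subset_univ B).ssubset_of_ne hbn)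
      omega
    omega
  -- complement facts when A ∪ B = univ
  have huniv : A.card + B.card = n → ∀ i : Fin n, i ∉ A → i ∈ B := by
    intro h i hi
    have : A ∪ B = Finset.univ := by
      apply Finset.eq_univ_of_card
      rw [Finset.card_union_of_disjoint hdisj, Fintype.card_fin]; exact h
    have hi2 : i ∈ A ∪ B := this ▸ Finset.mem_univ i
    rcases Finset.mem_union.1 hi2 with h' | h'
    · exact absurd h' hi
    · exact h'
  have huniv' : A.card + B.card = n → ∀ i : Fin n, i ∉ B → i ∈ A := by
    intro h i hi
    have : A ∪ B = Finset.univ := by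
      apply Finset.eq_univ_of_card
      rw [Finset.card_union_of_disjoint hdisj, Fintype.card_fin]; exact h
    have hi2 : i ∈ A ∪ B := this ▸ Finset.mem_univ i
    rcases Finset.mem_union.1 hi2 with h' | h'
    · exact h'
    · exact absurd h' hi
  by_cases hord : A.card ≤ B.card
  · rcases Nat.mod_two_eq_zero_or_one A.card with haE | haO
    · by_cases ht : A.card + B.card = n
      · -- type (iv): K = A, color !c
        refine Or.inr (Or.inr (even_branch A (Nat.even_iff.2 haE) (by omega) (by omega)
          (!c) hinA ?_))
        intro i hi
        have hi' : i ∉ A := (Finset.mem_sdiff.1 hi).2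
        exact hinB i (huniv ht i hi')
      · by_cases hsz : 2 * A.card + 2 ≤ n
        · -- type (i): k = A.card + 1
          obtain ⟨K, hAK, hKB, hKc⟩ := exists_mid A (Finset.univ \ B) hAsubBc
            (A.card + 1) (by omega) (by omega)
          refine Or.inr (Or.inl (odd_branch K (Nat.odd_iff.2 (by omega)) (by omega) c ?_ ?_))
          · intro i hi
            exact hnotB i (Finset.mem_sdiff.1 (hKB hi)).2
          · intro i hi
            exact hnotA i fun h => (Finset.mem_sdiff.1 hi).2 (hAK h)
        · -- forced: a = b, n = 2a+1; type (iii): K = B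
          have hba : B.card ≤ A.card := by omega
          refine Or.inr (Or.inr (even_branch B (Nat.even_iff.2 (by omega)) (by omega) (by omega)
            c ?_ ?_))
          · intro i hi
            exact hnotA i fun h => Finset.disjoint_left.1 hdisj h hi
          · intro i hi
            exact hnotB i (Finset.mem_sdiff.1 hi).2
    · -- a odd: type (i), K = A
      refine Or.inr (Or.inl (odd_branch A (Nat.odd_iff.2 haO) (by omega) c ?_ ?_))
      · intro i hi
        exact hnotB i fun h => Finset.disjoint_left.1 hdisj hi h
      · intro i hi
        exact hnotA i (Finset.mem_sdiff.1 hi).2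
  · rcases Nat.mod_two_eq_zero_or_one B.card with hbE | hbO
    · -- type (iii): K = B
      refine Or.inr (Or.inr (even_branch B (Nat.even_iff.2 hbE) (by omega) (by omega)
        c ?_ ?_))
      · intro i hi
        exact hnotA i fun h => Finset.disjoint_left.1 hdisj h hi
      · intro i hi
        exact hnotB i (Finset.mem_sdiff.1 hi).2
    · by_cases ht : A.card + B.card = n
      · -- type (ii): K = B, color !c
        refine Or.inr (Or.inl (odd_branch B (Nat.odd_iff.2 hbO) (by omega) (!c) hinB ?_))
        intro i hi
        exact hinA i (huniv' ht i (Finset.mem_sdiff.1 hi).2)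
      · -- type (iii): k = B.card + 1
        obtain ⟨K, hBK, hKA, hKc⟩ := exists_mid B (Finset.univ \ A) hBsubAc
          (B.card + 1) (by omega) (by omega)
        refine Or.inr (Or.inr (even_branch K (Nat.even_iff.2 (by omega)) (by omega) (by omega)
          c ?_ ?_))
        · intro i hi
          exact hnotA i (Finset.mem_sdiff.1 (hKA hi)).2
        · intro i hi
          exact hnotB i fun h => (Finset.mem_sdiff.1 hi).2 (hBK h)

theorem matched_pair_lemma
    (n : ℕ) (u v : Fin n → ℕ) (hu : Function.Injective u) (hv : Function.Injective v)
    (huv : ∀ i j, u i ≠ v j) (χ : ℕ → Bool)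
    (hχ : ¬ ∃ i j : Fin n, i ≠ j ∧ χ (u i) = true ∧ χ (v i) = true ∧
      χ (u j) = false ∧ χ (v j) = false) :
    Mono χ (Finset.univ.image u) ∨
    (∃ K : Finset (Fin n), Odd K.card ∧ K.card ≤ n / 2 ∧
      Mono χ (K.image u ∪ (Finset.univ \ K).image v)) ∨
    (∃ K : Finset (Fin n), Even K.card ∧ 2 ≤ K.card ∧ K.card ≤ n / 2 ∧
      Mono χ (K.image v ∪ (Finset.univ \ K).image u)) := by
  obtain ⟨c, hc⟩ : ∃ c : Bool, ∀ i, χ (u i) = c ∨ χ (v i) = c := by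
    by_cases hP : ∃ i, χ (u i) = true ∧ χ (v i) = true
    · obtain ⟨i, hi1, hi2⟩ := hP
      refine ⟨true, fun j => ?_⟩
      by_contra hcon
      push_neg at hcon
      obtain ⟨h1, h2⟩ := hcon
      have h1' : χ (u j) = false := by cases h : χ (u j) <;> simp_all
      have h2' : χ (v j) = false := by cases h : χ (v j) <;> simp_all
      refine hχ ⟨i, j, ?_, hi1, hi2, h1', h2'⟩
      rintro rfl; simp_all
    · push_neg at hP
      refine ⟨false, fun j => ?_⟩
      cases h : χ (u j) with
      | false => exact Or.inl rfl
      | true =>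
        refine Or.inr ?_
        have := hP j h
        cases h2 : χ (v j) <;> simp_all
  exact main_aux u v χ c hc
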